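/- Let C be a bounded subset of ℝ with the property that there exists α ∈ (0, 1/2) such that for every x, y ∈ C, the open interval ((x+y)/2 - α|y-x|, (x+y)/2 + α|y-x|) does not intersect C. Then C has Lebesgue measure zero. -/

import Mathlib

open MeasureTheory

/-- One splitting step: any subset of `C` contained in `[a,b]` can be covered by two
intervals of length at most `(1/2 - α)*(b-a) + 2*ε`. -/
lemma middle_gap_split (C : Set ℝ) (α : ℝ) (hα0 : 0 < α) (hα2 : α < 1 / 2)
    (hgap : ∀ x ∈ C, ∀ y ∈ C,
      Set.Ioo ((x + y) / 2 - α * |y - x|) ((x + y) / 2 + α * |y - x|) ∩ C = ∅)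
    (S : Set ℝ) (hSC : S ⊆ C) (hne : S.Nonempty) (a b : ℝ) (hSab : S ⊆ Set.Icc a b)
    (ε : ℝ) (hε : 0 < ε) :
    ∃ a₁ b₁ a₂ b₂ : ℝ, S ⊆ Set.Icc a₁ b₁ ∪ Set.Icc a₂ b₂ ∧
      b₁ - a₁ ≤ (1 / 2 - α) * (b - a) + 2 * ε ∧
      b₂ - a₂ ≤ (1 / 2 - α) * (b - a) + 2 * ε := by
  have hbdA : BddBelow S := ⟨a, fun z hz => (hSab hz).1⟩
  have hbdB : BddAbove S := ⟨b, fun z hz => (hSab hz).2⟩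
  set A := sInf S with hAdef
  set B := sSup S with hBdef
  have hAs : ∀ z ∈ S, A ≤ z := fun z hz => csInf_le hbdA hz
  have hBs : ∀ z ∈ S, z ≤ B := fun z hz => le_csSup hbdB hz
  have haA : a ≤ A := le_csInf hne (fun z hz => (hSab hz).1)
  have hBb : B ≤ b := csSup_le hne (fun z hz => (hSab hz).2)
  have hAB : A ≤ B := by
    obtain ⟨s, hs⟩ := hne
    exact le_trans (hAs s hs) (hBs s hs)
  have hab : a ≤ b := le_trans haA (le_trans hAB hBb)
  obtain ⟨x, hxS, hx⟩ := Real.lt_sInf_add_pos hne hε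
  obtain ⟨y, hyS, hy⟩ := Real.add_neg_lt_sSup hne (neg_neg_of_pos hε)
  rw [← hAdef] at hx
  rw [← hBdef] at hy
  rcases le_or_gt y x with hyx | hxy
  · -- degenerate case: B - A < 2ε
    refine ⟨A, B, A, A, ?_, ?_, ?_⟩
    · intro z hz; exact Or.inl ⟨hAs z hz, hBs z hz⟩
    · have h1 : B + (-ε) < y := hy
      have h2 : x < A + ε := hx
      have : B - A < 2 * ε := by linarith
      nlinarith [mul_nonneg (by linarith : (0:ℝ) ≤ 1 / 2 - α) (by linarith : (0:ℝ) ≤ b - a)]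
    · nlinarith [mul_nonneg (by linarith : (0:ℝ) ≤ 1 / 2 - α) (by linarith : (0:ℝ) ≤ b - a)]
  · -- real split
    have hxC : x ∈ C := hSC hxS
    have hyC : y ∈ C := hSC hyS
    have habs : |y - x| = y - x := abs_of_pos (by linarith)
    have hg := hgap x hxC y hyC
    rw [habs] at hg
    set m := (x + y) / 2 with hm
    set r := y - x with hr
    have hx' : x < A + ε := hx
    have hy' : B - ε < y := by have := hy; linarith
    have hxA : A ≤ x := hAs x hxS
    have hyB : y ≤ B := hBs y hyS
    refine ⟨A, m - α * r, m + α * r, B, ?_, ?_, ?_⟩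
    · intro z hz
      rcases le_or_gt z (m - α * r) with h1 | h1
      · exact Or.inl ⟨hAs z hz, h1⟩
      · rcases lt_or_ge z (m + α * r) with h2 | h2
        · exfalso
          have : z ∈ Set.Ioo (m - α * r) (m + α * r) ∩ C := ⟨⟨h1, h2⟩, hSC hz⟩
          rw [hg] at this
          exact this
        · exact Or.inr ⟨h2, hBs z hz⟩
    · have hBA : B - A ≤ b - a := by linarith
      have hr1 : r > B - A - 2 * ε := by simp only [hr]; linarith
      have : α * r ≥ α * (B - A - 2 * ε) := by
        by_cases h : B - A - 2 * ε ≤ 0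
        · nlinarith [mul_pos hα0 (by linarith : (0:ℝ) < r)]
        · nlinarith
      have hm2 : m ≤ (A + ε + B) / 2 := by simp only [hm]; linarith
      nlinarith [mul_nonneg (by linarith : (0:ℝ) ≤ 1 / 2 - α) (by linarith : (0:ℝ) ≤ (b - a) - (B - A))]
    · have hBA : B - A ≤ b - a := by linarith
      have hr1 : r > B - A - 2 * ε := by simp only [hr]; linarith
      have : α * r ≥ α * (B - A - 2 * ε) := by
        by_cases h : B - A - 2 * ε ≤ 0
        · nlinarith [mul_pos hα0 (by linarith : (0:ℝ) < r)]
        · nlinarith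
      have hm2 : (A + B - ε) / 2 ≤ m := by simp only [hm]; linarith
      nlinarith [mul_nonneg (by linarith : (0:ℝ) ≤ 1 / 2 - α) (by linarith : (0:ℝ) ≤ (b - a) - (B - A))]

lemma middle_gap_key (C : Set ℝ) (α : ℝ) (hα0 : 0 < α) (hα2 : α < 1 / 2)
    (hgap : ∀ x ∈ C, ∀ y ∈ C,
      Set.Ioo ((x + y) / 2 - α * |y - x|) ((x + y) / 2 + α * |y - x|) ∩ C = ∅) :
    ∀ n : ℕ, ∀ S : Set ℝ, S ⊆ C → ∀ a b : ℝ, S ⊆ Set.Icc a b → ∀ ε : ℝ, 0 < ε →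
      volume S ≤ ENNReal.ofReal ((1 - 2 * α) ^ n * (b - a) + ε) := by
  intro n
  induction n with
  | zero =>
    intro S hSC a b hSab ε hε
    calc volume S ≤ volume (Set.Icc a b) := measure_mono hSab
      _ = ENNReal.ofReal (b - a) := Real.volume_Icc
      _ ≤ ENNReal.ofReal ((1 - 2 * α) ^ 0 * (b - a) + ε) := by
          apply ENNReal.ofReal_le_ofReal; simp; linarith
  | succ n ih =>
    intro S hSC a b hSab ε hε
    rcases S.eq_empty_or_nonempty with hS | hne
    · simp [hS]
    have hab : a ≤ b := by
      obtain ⟨s, hs⟩ := hne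
      exact le_trans (hSab hs).1 (hSab hs).2
    set c : ℝ := 1 - 2 * α with hc
    have hc0 : 0 < c := by simp only [hc]; linarith
    set K : ℝ := c ^ n with hK
    have hK0 : 0 < K := pow_pos hc0 n
    set ε' : ℝ := ε / (8 * K) with hε'def
    have hε' : 0 < ε' := div_pos hε (by positivity)
    obtain ⟨a₁, b₁, a₂, b₂, hcov, h1, h2⟩ :=
      middle_gap_split C α hα0 hα2 hgap S hSC hne a b hSab ε' hε'
    have hS1 : S ∩ Set.Icc a₁ b₁ ⊆ C := fun z hz => hSC hz.1
    have hS2 : S ∩ Set.Icc a₂ b₂ ⊆ C := fun z hz => hSC hz.1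
    have ih1 := ih (S ∩ Set.Icc a₁ b₁) hS1 a₁ b₁ (Set.inter_subset_right) (ε / 4) (by linarith)
    have ih2 := ih (S ∩ Set.Icc a₂ b₂) hS2 a₂ b₂ (Set.inter_subset_right) (ε / 4) (by linarith)
    have hKε' : K * ε' = ε / 8 := by
      rw [hε'def]; field_simp
    have hXnn : 0 ≤ K * ((1 / 2 - α) * (b - a) + 2 * ε') + ε / 4 := by
      nlinarith [mul_nonneg hK0.le (mul_nonneg (by linarith : (0:ℝ) ≤ 1 / 2 - α) (by linarith : (0:ℝ) ≤ b - a))]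
    have hb1 : ENNReal.ofReal (K * (b₁ - a₁) + ε / 4) ≤
        ENNReal.ofReal (K * ((1 / 2 - α) * (b - a) + 2 * ε') + ε / 4) := by
      apply ENNReal.ofReal_le_ofReal
      nlinarith
    have hb2 : ENNReal.ofReal (K * (b₂ - a₂) + ε / 4) ≤
        ENNReal.ofReal (K * ((1 / 2 - α) * (b - a) + 2 * ε') + ε / 4) := by
      apply ENNReal.ofReal_le_ofReal
      nlinarith
    calc volume S ≤ volume ((S ∩ Set.Icc a₁ b₁) ∪ (S ∩ Set.Icc a₂ b₂)) := by
          apply measure_mono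
          intro z hz
          rcases hcov hz with h | h
          · exact Or.inl ⟨hz, h⟩
          · exact Or.inr ⟨hz, h⟩
      _ ≤ volume (S ∩ Set.Icc a₁ b₁) + volume (S ∩ Set.Icc a₂ b₂) := measure_union_le _ _
      _ ≤ ENNReal.ofReal (K * ((1 / 2 - α) * (b - a) + 2 * ε') + ε / 4) +
          ENNReal.ofReal (K * ((1 / 2 - α) * (b - a) + 2 * ε') + ε / 4) :=
            add_le_add (le_trans ih1 hb1) (le_trans ih2 hb2)
      _ = ENNReal.ofReal (2 * (K * ((1 / 2 - α) * (b - a) + 2 * ε') + ε / 4)) := by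
          rw [← ENNReal.ofReal_add hXnn hXnn]; ring_nf
      _ ≤ ENNReal.ofReal (c ^ (n + 1) * (b - a) + ε) := by
          apply ENNReal.ofReal_le_ofReal
          have hpow : 2 * (K * ((1 / 2 - α) * (b - a))) = c ^ (n + 1) * (b - a) := by
            rw [pow_succ, hK, hc]; ring
          linarith [hKε', hpow]

theorem middle_gap_implies_null (C : Set ℝ) (hC : Bornology.IsBounded C)
    (α : ℝ) (hα : α ∈ Set.Ioo (0 : ℝ) (1 / 2))
    (hgap : ∀ x ∈ C, ∀ y ∈ C,
      Set.Ioo ((x + y) / 2 - α * |y - x|) ((x + y) / 2 + α * |y - x|) ∩ C = ∅) :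
    volume C = 0 := by
  obtain ⟨hα0, hα2⟩ := hα
  obtain ⟨R, hR⟩ := hC.subset_closedBall 0
  have hCIcc : C ⊆ Set.Icc (0 - R) (0 + R) := by
    rwa [← Real.closedBall_eq_Icc]
  have key := middle_gap_key C α hα0 hα2 hgap
  refine le_antisymm ?_ zero_le
  apply ENNReal.le_of_forall_pos_le_add
  intro ε hε _
  rw [zero_add]
  set c : ℝ := 1 - 2 * α with hc
  have hc0 : 0 ≤ c := by simp only [hc]; linarith
  have hc1 : c < 1 := by simp only [hc]; linarith
  have htend : Filter.Tendsto (fun n : ℕ => c ^ n * ((0 + R) - (0 - R))) Filter.atTop (nhds 0) := by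
    have h := tendsto_pow_atTop_nhds_zero_of_lt_one hc0 hc1
    simpa using h.mul_const _
  have hεR : (0 : ℝ) < (ε : ℝ) / 2 := by
    have : (0 : ℝ) < (ε : ℝ) := by exact_mod_cast hε
    linarith
  obtain ⟨n, hn⟩ := (htend.eventually_lt_const hεR).exists
  have h := key n C (le_refl _) (0 - R) (0 + R) hCIcc ((ε : ℝ) / 2) hεR
  calc volume C ≤ ENNReal.ofReal (c ^ n * ((0 + R) - (0 - R)) + (ε : ℝ) / 2) := h
    _ ≤ ENNReal.ofReal (ε : ℝ) := by
        apply ENNReal.ofReal_le_ofReal; linarith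
    _ = (ε : ENNReal) := ENNReal.ofReal_coe_nnreal
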